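/- Let f : ℝ³ → ℝ³ be differentiable on an open neighborhood of the unit sphere S² = {x ∈ ℝ³ : |x| = 1}, and suppose: (a) |f(x)| = 1 for every x ∈ S²; (b) for every x ∈ S² and every v ∈ ℝ³ with v·x = 0, |Df(x)v| = |v| (the differential maps each tangent plane isometrically); (c) for every x ∈ S² and every v, w ∈ ℝ³ with v·x = w·x = 0, ⟨ Df(x)v × Df(x)w , f(x) ⟩ = ⟨ v × w , x ⟩ (the deformation preserves orientation). Then there exists a single rotation Q ∈ SO(3) such that f(x) = Q x for every x ∈ S². -/

import Mathlib

open Matrix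

noncomputable section

/-- Euclidean dot product on `ℝ³`. -/
def dot3 (x y : Fin 3 → ℝ) : ℝ := x 0 * y 0 + x 1 * y 1 + x 2 * y 2

/-- Cross product on `ℝ³`. -/
def cross3 (x y : Fin 3 → ℝ) : Fin 3 → ℝ :=
  ![x 1 * y 2 - x 2 * y 1, x 2 * y 0 - x 0 * y 2, x 0 * y 1 - x 1 * y 0]

/-- Euclidean length on `ℝ³`. -/
def len3 (x : Fin 3 → ℝ) : ℝ := Real.sqrt (dot3 x x)

namespace SphereRig

abbrev E3 := EuclideanSpace ℝ (Fin 3)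

open RealInnerProductSpace

variable {g : E3 → E3} {x : E3}

lemma dot3_eq (x y : E3) : dot3 x y = ⟪x, y⟫ := by
  simp [PiLp.inner_apply, Fin.sum_univ_three, dot3]; ring

lemma len3_eq (x : E3) : len3 x = ‖x‖ := by
  rw [EuclideanSpace.norm_eq]
  simp [Fin.sum_univ_three, len3, dot3, sq]

def sc (x v : E3) (t : ℝ) : E3 := Real.cos t • x + Real.sin t • v

lemma sc_zero (x v : E3) : sc x v 0 = x := by simp [sc]

lemma sc_mem (x v : E3) (hx : ‖x‖ = 1) (hv : ‖v‖ = 1) (hvx : ⟪v, x⟫ = 0) (t : ℝ) :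
    ‖sc x v t‖ = 1 := by
  have h : ⟪sc x v t, sc x v t⟫ = 1 := by
    rw [sc, real_inner_add_add_self]
    rw [real_inner_smul_left, real_inner_smul_right, real_inner_smul_left,
      real_inner_smul_right, real_inner_smul_left, real_inner_smul_right,
      real_inner_self_eq_norm_sq, real_inner_self_eq_norm_sq, real_inner_comm v x, hvx,
      hx, hv]
    ring_nf
    rw [add_comm]
    exact Real.sin_sq_add_cos_sq t
  have := real_inner_self_eq_norm_sq (sc x v t)
  nlinarith [norm_nonneg (sc x v t)]

lemma sc_hasDerivAt (x v : E3) (t : ℝ) :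
    HasDerivAt (sc x v) ((-Real.sin t) • x + Real.cos t • v) t :=
  ((Real.hasDerivAt_cos t).smul_const x).add ((Real.hasDerivAt_sin t).smul_const v)

lemma sc_hasDerivAt_zero (x v : E3) : HasDerivAt (sc x v) v 0 := by
  simpa using sc_hasDerivAt x v 0

lemma comp_sc_hasDerivAt (hd : DifferentiableAt ℝ g x) (v : E3) :
    HasDerivAt (fun t => g (sc x v t)) (fderiv ℝ g x v) 0 := by
  have h1 := hd.hasFDerivAt
  have h2 := sc_hasDerivAt_zero x v
  rw [← sc_zero x v] at h1
  simpa [sc_zero, Function.comp_def] using h1.comp_hasDerivAt 0 h2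

/-- If `g` maps the sphere to the sphere, tangent vectors map into the tangent plane
at the image. -/
lemma tangent_perp (hd : DifferentiableAt ℝ g x) (h1 : ∀ y : E3, ‖y‖ = 1 → ‖g y‖ = 1)
    (hx : ‖x‖ = 1) (v : E3) (hvx : ⟪v, x⟫ = 0) :
    ⟪fderiv ℝ g x v, g x⟫ = 0 := by
  rcases eq_or_ne v 0 with rfl | hv0
  · simp
  · set u : E3 := ‖v‖⁻¹ • v with hu
    have hvu : v = ‖v‖ • u := by
      rw [hu, smul_smul, mul_inv_cancel₀ (norm_ne_zero_iff.2 hv0), one_smul]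
    have hnu : ‖u‖ = 1 := by
      rw [hu, norm_smul]
      simp [norm_ne_zero_iff.2 hv0]
    have hux : ⟪u, x⟫ = 0 := by
      rw [hu, real_inner_smul_left, hvx, mul_zero]
    -- core for unit u
    have key : ⟪fderiv ℝ g x u, g x⟫ = 0 := by
      have hc := comp_sc_hasDerivAt hd u
      have hφ : HasDerivAt (fun t => ⟪g (sc x u t), g (sc x u t)⟫)
          (⟪g (sc x u 0), fderiv ℝ g x u⟫ + ⟪fderiv ℝ g x u, g (sc x u 0)⟫) 0 := by
        have := HasDerivAt.inner ℝ (by simpa [sc_zero] using hc) (by simpa [sc_zero] using hc)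
        simpa [sc_zero] using this
      have hconst : (fun t => ⟪g (sc x u t), g (sc x u t)⟫) = fun _ => (1 : ℝ) := by
        funext t
        have := h1 _ (sc_mem x u hx hnu hux t)
        rw [real_inner_self_eq_norm_sq, this, one_pow]
      rw [hconst] at hφ
      have := hφ.unique (hasDerivAt_const 0 1)
      rw [sc_zero] at this
      rw [real_inner_comm] at this
      linarith
    rw [hvu, _root_.map_smul]
    rw [real_inner_smul_left, key, mul_zero]

/-- polarization: the differential preserves inner products of tangent vectors -/
lemma tangent_inner (hd : DifferentiableAt ℝ g x)
    (hisom : ∀ v : E3, ⟪v, x⟫ = 0 → ‖fderiv ℝ g x v‖ = ‖v‖)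
    (v w : E3) (hvx : ⟪v, x⟫ = 0) (hwx : ⟪w, x⟫ = 0) :
    ⟪fderiv ℝ g x v, fderiv ℝ g x w⟫ = ⟪v, w⟫ := by
  have hvw : ⟪v + w, x⟫ = 0 := by rw [inner_add_left, hvx, hwx, add_zero]
  have e1 := hisom v hvx
  have e2 := hisom w hwx
  have e3 := hisom _ hvw
  rw [map_add] at e3
  have a1 := norm_add_sq_real (fderiv ℝ g x v) (fderiv ℝ g x w)
  have a2 := norm_add_sq_real v w
  rw [e1, e2, e3] at a1
  linarith

lemma norm_hasFDerivAt {z : E3} (hz : z ≠ 0) :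
    HasFDerivAt (fun y : E3 => ‖y‖) (‖z‖⁻¹ • innerSL ℝ z) z := by
  have hpos : (0:ℝ) < ⟪z, z⟫ := by
    rw [real_inner_self_eq_norm_sq]
    exact pow_pos (norm_pos_iff.2 hz) 2
  have hsq : HasFDerivAt (fun y : E3 => ⟪y, y⟫)
      ((fderivInnerCLM ℝ (z, z)).comp ((ContinuousLinearMap.id ℝ E3).prod
        (ContinuousLinearMap.id ℝ E3))) z :=
    HasFDerivAt.inner ℝ (hasFDerivAt_id z) (hasFDerivAt_id z)
  have hs := (Real.hasDerivAt_sqrt (ne_of_gt hpos)).comp_hasFDerivAt (f := fun y : E3 => ⟪y, y⟫) z hsq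
  have hfun : (Real.sqrt ∘ fun y : E3 => ⟪y, y⟫) = fun y : E3 => ‖y‖ := by
    funext y; rw [Function.comp_apply, ← norm_eq_sqrt_real_inner]
  rw [hfun] at hs
  refine hs.congr_fderiv ?_
  ext v
  have h1 : Real.sqrt ⟪z, z⟫ = ‖z‖ := (norm_eq_sqrt_real_inner z).symm
  have h2 : ‖z‖ ≠ 0 := norm_ne_zero_iff.2 hz
  simp only [ContinuousLinearMap.smul_apply, ContinuousLinearMap.comp_apply,
    ContinuousLinearMap.prod_apply, ContinuousLinearMap.id_apply, fderivInnerCLM_apply,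
    innerSL_apply_apply, smul_eq_mul, h1]
  rw [real_inner_comm v z]
  field_simp
  ring

lemma ext_hasFDerivAt (hd : ∀ y : E3, ‖y‖ = 1 → DifferentiableAt ℝ g y)
    {z : E3} (hz : z ≠ 0) :
    ∃ T : E3 →L[ℝ] E3, HasFDerivAt (fun y => ‖y‖ • g (‖y‖⁻¹ • y)) T z ∧
      ∀ v, T v = ⟪‖z‖⁻¹ • z, v⟫ • g (‖z‖⁻¹ • z)
        + fderiv ℝ g (‖z‖⁻¹ • z) (v - ⟪‖z‖⁻¹ • z, v⟫ • (‖z‖⁻¹ • z)) := by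
  have h2 : ‖z‖ ≠ 0 := norm_ne_zero_iff.2 hz
  have hnz : ‖(‖z‖⁻¹ • z : E3)‖ = 1 := by
    rw [norm_smul]; simp [h2]
  have hnorm := norm_hasFDerivAt hz
  have hinv := (hasDerivAt_inv h2).comp_hasFDerivAt z hnorm
  have hN := hinv.smul (hasFDerivAt_id z)
  have hg' : HasFDerivAt g (fderiv ℝ g (‖z‖⁻¹ • z)) (‖z‖⁻¹ • z) :=
    (hd _ hnz).hasFDerivAt
  have hcomp := HasFDerivAt.comp (g := g) (f := fun y : E3 => ‖y‖⁻¹ • y) z hg' hN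
  have hF := hnorm.smul hcomp
  refine ⟨_, hF, fun v => ?_⟩
  simp only [ContinuousLinearMap.add_apply, ContinuousLinearMap.smul_apply,
    ContinuousLinearMap.comp_apply, ContinuousLinearMap.smulRight_apply,
    ContinuousLinearMap.id_apply, innerSL_apply_apply, smul_eq_mul, Function.comp_apply, id_eq]
  rw [real_inner_smul_left]
  have harg : (‖z‖ : ℝ) • ((‖z‖⁻¹ : ℝ) • v + (-(‖z‖ ^ 2)⁻¹ * (‖z‖⁻¹ * ⟪z, v⟫)) • z)
      = v - (‖z‖⁻¹ * ⟪z, v⟫) • ((‖z‖⁻¹ : ℝ) • z) := by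
    match_scalars
    · field_simp
    · field_simp
  rw [← _root_.map_smul (fderiv ℝ g (‖z‖⁻¹ • z)) (‖z‖ : ℝ), harg]
  abel

lemma T_isometry (hd : ∀ y : E3, ‖y‖ = 1 → DifferentiableAt ℝ g y)
    (h1 : ∀ y : E3, ‖y‖ = 1 → ‖g y‖ = 1)
    (hisom : ∀ x : E3, ‖x‖ = 1 → ∀ v, ⟪v, x⟫ = 0 → ‖fderiv ℝ g x v‖ = ‖v‖)
    {x : E3} (hx : ‖x‖ = 1) (v : E3) :
    ‖⟪x, v⟫ • g x + fderiv ℝ g x (v - ⟪x, v⟫ • x)‖ = ‖v‖ := by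
  set a : ℝ := ⟪x, v⟫ with ha
  set w : E3 := v - a • x with hw
  have hwx : ⟪w, x⟫ = 0 := by
    rw [hw, inner_sub_left, real_inner_smul_left, real_inner_self_eq_norm_sq, hx,
      real_inner_comm x v, ← ha]
    ring
  have hperp := tangent_perp (hd x hx) h1 hx w hwx
  have hnw : ‖fderiv ℝ g x w‖ = ‖w‖ := hisom x hx w hwx
  have e1 : ‖a • g x + fderiv ℝ g x w‖ ^ 2 = a ^ 2 + ‖w‖ ^ 2 := by
    rw [norm_add_sq_real, real_inner_smul_left, real_inner_comm, hperp, norm_smul, h1 x hx,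
      hnw]
    simp [abs_mul_abs_self, mul_pow, sq_abs]
  have e2 : ‖v‖ ^ 2 = a ^ 2 + ‖w‖ ^ 2 := by
    have hv : v = a • x + w := by rw [hw]; abel
    have hxw : ⟪x, w⟫ = 0 := by rw [real_inner_comm w x]; exact hwx
    rw [hv, norm_add_sq_real, real_inner_smul_left, hxw, norm_smul, hx]
    simp [mul_pow, sq_abs]
  have := e1.trans e2.symm
  have h3 : ‖a • g x + fderiv ℝ g x w‖ = ‖v‖ := by
    nlinarith [norm_nonneg (a • g x + fderiv ℝ g x w), norm_nonneg v]
  exact h3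

lemma sphere_lipschitz (hd : ∀ y : E3, ‖y‖ = 1 → DifferentiableAt ℝ g y)
    (h1 : ∀ y : E3, ‖y‖ = 1 → ‖g y‖ = 1)
    (hisom : ∀ x : E3, ‖x‖ = 1 → ∀ v, ⟪v, x⟫ = 0 → ‖fderiv ℝ g x v‖ = ‖v‖)
    {a b : E3} (ha : ‖a‖ = 1) (hb : ‖b‖ = 1) :
    ‖g b - g a‖ ≤ ‖b - a‖ := by
  rcases eq_or_ne b (-a) with rfl | hba
  · have : -a - a = (-2 : ℝ) • a := by module
    rw [this, norm_smul]
    have t := norm_sub_le (g (-a)) (g a)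
    rw [h1 _ hb, h1 _ ha] at t
    simp only [ha]
    norm_num
    linarith
  · set s : Set E3 := segment ℝ a b with hs
    have hs0 : ∀ z ∈ s, z ≠ 0 := by
      rintro z hz rfl
      obtain ⟨u, v, hu, hv, huv, hzero⟩ := hz
      have h1n : ‖u • a‖ = ‖(-v) • b‖ := by
        rw [neg_smul]
        congr 1
        have : u • a = -(v • b) := by
          have := hzero
          rw [add_eq_zero_iff_eq_neg] at this
          exact this
        rw [this]
      rw [norm_smul, norm_smul, ha, hb] at h1n
      simp only [mul_one, Real.norm_eq_abs, abs_of_nonneg hu, abs_neg, abs_of_nonneg hv] at h1n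
      subst h1n
      have hu2 : u = 1/2 := by linarith
      apply hba
      have : u • a + u • b = 0 := hzero
      rw [← smul_add] at this
      have h2 : a + b = 0 := by
        have hu0 : u ≠ 0 := by rw [hu2]; norm_num
        exact (smul_eq_zero.1 this).resolve_left hu0
      rw [← neg_eq_iff_add_eq_zero] at h2
      rw [← h2]
    have hF : ∀ z ∈ s, ∃ T : E3 →L[ℝ] E3,
        HasFDerivAt (fun y => ‖y‖ • g (‖y‖⁻¹ • y)) T z ∧
        ∀ v, T v = ⟪‖z‖⁻¹ • z, v⟫ • g (‖z‖⁻¹ • z)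
          + fderiv ℝ g (‖z‖⁻¹ • z) (v - ⟪‖z‖⁻¹ • z, v⟫ • (‖z‖⁻¹ • z)) :=
      fun z hz => ext_hasFDerivAt hd (hs0 z hz)
    choose! T hT hTv using hF
    have hbound : ∀ z ∈ s, ‖T z‖ ≤ 1 := by
      intro z hz
      apply ContinuousLinearMap.opNorm_le_bound _ zero_le_one
      intro v
      rw [one_mul, hTv z hz v]
      have hnz : ‖(‖z‖⁻¹ • z : E3)‖ = 1 := by
        rw [norm_smul]
        simp [norm_ne_zero_iff.2 (hs0 z hz)]
      exact le_of_eq (T_isometry hd h1 hisom hnz v)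
    have key := Convex.norm_image_sub_le_of_norm_hasFDerivWithin_le
      (fun z hz => (hT z hz).hasFDerivWithinAt) hbound (convex_segment a b)
      (left_mem_segment ℝ a b) (right_mem_segment ℝ a b)
    have Fa : ‖a‖ • g (‖a‖⁻¹ • a) = g a := by rw [ha]; simp
    have Fb : ‖b‖ • g (‖b‖⁻¹ • b) = g b := by rw [hb]; simp
    rw [Fa, Fb, one_mul] at key
    exact key

lemma inner_ge (hd : ∀ y : E3, ‖y‖ = 1 → DifferentiableAt ℝ g y)
    (h1 : ∀ y : E3, ‖y‖ = 1 → ‖g y‖ = 1)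
    (hisom : ∀ x : E3, ‖x‖ = 1 → ∀ v, ⟪v, x⟫ = 0 → ‖fderiv ℝ g x v‖ = ‖v‖)
    {a b : E3} (ha : ‖a‖ = 1) (hb : ‖b‖ = 1) :
    ⟪a, b⟫ ≤ ⟪g a, g b⟫ := by
  have h := sphere_lipschitz hd h1 hisom ha hb
  have h2 : ‖g b - g a‖ ^ 2 ≤ ‖b - a‖ ^ 2 := by
    apply pow_le_pow_left₀ (norm_nonneg _) h
  rw [norm_sub_sq_real, norm_sub_sq_real, h1 _ ha, h1 _ hb, ha, hb] at h2
  rw [real_inner_comm b a, real_inner_comm (g b) (g a)]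
  linarith

lemma expand3 {u : Fin 3 → E3} (hu : Orthonormal ℝ u) (y : E3) :
    y = ∑ i, ⟪u i, y⟫ • u i := by
  have hcard : Fintype.card (Fin 3) = Module.finrank ℝ E3 := by
    simp [finrank_euclideanSpace_fin]
  set b := basisOfOrthonormalOfCardEqFinrank hu hcard with hbdef
  have hb : ⇑b = u := coe_basisOfOrthonormalOfCardEqFinrank hu hcard
  set z : E3 := y - ∑ i, ⟪u i, y⟫ • u i with hz
  have hzj : ∀ j, ⟪u j, z⟫ = 0 := by
    intro j
    rw [hz, inner_sub_right, inner_sum]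
    have : ∀ i, ⟪u j, ⟪u i, y⟫ • u i⟫ = (if i = j then ⟪u i, y⟫ else 0) := by
      intro i
      rw [real_inner_smul_right]
      rcases eq_or_ne i j with rfl | hij
      · rw [orthonormal_iff_ite.1 hu]; simp
      · rw [orthonormal_iff_ite.1 hu]; simp [hij, Ne.symm hij]
    rw [Finset.sum_congr rfl fun i _ => this i]
    simp
  have hzspan : z ∈ Submodule.span ℝ (Set.range u) := by
    rw [← hb, b.span_eq]; trivial
  obtain ⟨c, hc⟩ := (Submodule.mem_span_range_iff_exists_fun ℝ).1 hzspan
  have : ⟪z, z⟫ = 0 := by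
    rw [show (⟪z, z⟫ : ℝ) = ⟪∑ i, c i • u i, z⟫ from by rw [hc], sum_inner]
    apply Finset.sum_eq_zero
    intro i _
    rw [real_inner_smul_left, hzj i, mul_zero]
  have hz0 : z = 0 := by
    rwa [real_inner_self_eq_norm_sq, pow_eq_zero_iff (by norm_num), norm_eq_zero] at this
  rw [hz] at hz0
  linear_combination (norm := module) hz0

lemma surj (hd : ∀ y : E3, ‖y‖ = 1 → DifferentiableAt ℝ g y)
    (h1 : ∀ y : E3, ‖y‖ = 1 → ‖g y‖ = 1)
    (hisom : ∀ x : E3, ‖x‖ = 1 → ∀ v, ⟪v, x⟫ = 0 → ‖fderiv ℝ g x v‖ = ‖v‖)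
    {p : E3} (hp : ‖p‖ = 1) : ∃ x : E3, ‖x‖ = 1 ∧ g x = p := by
  -- the sphere is compact and nonempty
  have hmem : ∀ y : E3, y ∈ Metric.sphere (0 : E3) 1 ↔ ‖y‖ = 1 := by
    intro y; rw [mem_sphere_zero_iff_norm]
  have hne : (Metric.sphere (0 : E3) 1).Nonempty :=
    ⟨EuclideanSpace.single 0 1, by rw [hmem]; simp⟩
  have hcont : ContinuousOn (fun y => (⟪g y, p⟫ : ℝ)) (Metric.sphere (0 : E3) 1) := by
    intro y hy
    exact ((hd y ((hmem y).1 hy)).continuousAt.continuousWithinAt).inner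
      continuousWithinAt_const
  obtain ⟨x₀, hx₀mem, hmax⟩ := (isCompact_sphere (0 : E3) 1).exists_isMaxOn hne hcont
  have hx₀ : ‖x₀‖ = 1 := (hmem x₀).1 hx₀mem
  -- orthonormal basis extending x₀
  have hsingle : Orthonormal ℝ (Set.restrict {0} (fun _ : Fin 3 => x₀)) := by
    rw [orthonormal_iff_ite]
    intro i j
    have hij : i = j := Subtype.ext (by
      have h1 := i.2; have h2 := j.2
      simp only [Set.mem_singleton_iff] at h1 h2
      rw [h1, h2])
    subst hij
    simp only [Set.restrict_apply, if_pos rfl]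
    rw [real_inner_self_eq_norm_sq]; change ‖x₀‖ ^ 2 = _; simp [hx₀]
  obtain ⟨b, hb⟩ := hsingle.exists_orthonormalBasis_extension_of_card_eq
    (by simp [finrank_euclideanSpace_fin])
  have hb0 : b 0 = x₀ := hb 0 rfl
  have hbon := b.orthonormal
  have hbite := orthonormal_iff_ite.1 hbon
  have htan : ∀ i : Fin 3, i ≠ 0 → ⟪(b i : E3), x₀⟫ = 0 := by
    intro i hi
    rw [← hb0]
    rw [hbite]
    simp [hi]
  -- derivative of the objective vanishes in tangent directions
  have hderiv0 : ∀ i : Fin 3, i ≠ 0 → ⟪fderiv ℝ g x₀ (b i), p⟫ = 0 := by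
    intro i hi
    have hbn : ‖(b i : E3)‖ = 1 := hbon.1 i
    have hcurve := comp_sc_hasDerivAt (hd x₀ hx₀) (b i)
    have hφ : HasDerivAt (fun t => (⟪g (sc x₀ (b i) t), p⟫ : ℝ))
        (⟪g (sc x₀ (b i) 0), (0 : E3)⟫ + ⟪fderiv ℝ g x₀ (b i), p⟫) 0 :=
      HasDerivAt.inner ℝ hcurve (hasDerivAt_const 0 p)
    have hloc : IsLocalMax (fun t => (⟪g (sc x₀ (b i) t), p⟫ : ℝ)) 0 := by
      apply Filter.Eventually.of_forall
      intro t
      have := hmax ((hmem _).2 (sc_mem x₀ (b i) hx₀ hbn (htan i hi) t))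
      simpa [sc_zero] using this
    have := hloc.hasDerivAt_eq_zero hφ
    simpa using this
  -- the orthonormal frame at the image point
  set u : Fin 3 → E3 := ![g x₀, fderiv ℝ g x₀ (b 1), fderiv ℝ g x₀ (b 2)] with hu
  have h10 : (1 : Fin 3) ≠ 0 := by decide
  have h20 : (2 : Fin 3) ≠ 0 := by decide
  have hti := tangent_inner (hd x₀ hx₀) (hisom x₀ hx₀)
  have huon : Orthonormal ℝ u := by
    rw [orthonormal_iff_ite]
    intro i j
    have hg1 : (⟪g x₀, g x₀⟫ : ℝ) = 1 := by
      rw [real_inner_self_eq_norm_sq, h1 x₀ hx₀]; norm_num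
    have hp1 : ∀ i : Fin 3, i ≠ 0 → (⟪fderiv ℝ g x₀ (b i), g x₀⟫ : ℝ) = 0 :=
      fun i hi => tangent_perp (hd x₀ hx₀) h1 hx₀ (b i) (htan i hi)
    have hp1' : ∀ i : Fin 3, i ≠ 0 → (⟪g x₀, fderiv ℝ g x₀ (b i)⟫ : ℝ) = 0 :=
      fun i hi => by rw [real_inner_comm (fderiv ℝ g x₀ (b i)) (g x₀)]; exact hp1 i hi
    have ht11 : (⟪fderiv ℝ g x₀ (b 1), fderiv ℝ g x₀ (b 1)⟫ : ℝ) = 1 := by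
      rw [hti (b 1) (b 1) (htan 1 h10) (htan 1 h10), hbite]; simp
    have ht22 : (⟪fderiv ℝ g x₀ (b 2), fderiv ℝ g x₀ (b 2)⟫ : ℝ) = 1 := by
      rw [hti (b 2) (b 2) (htan 2 h20) (htan 2 h20), hbite]; simp
    have ht12 : (⟪fderiv ℝ g x₀ (b 1), fderiv ℝ g x₀ (b 2)⟫ : ℝ) = 0 := by
      rw [hti (b 1) (b 2) (htan 1 h10) (htan 2 h20), hbite]; simp
    have ht21 : (⟪fderiv ℝ g x₀ (b 2), fderiv ℝ g x₀ (b 1)⟫ : ℝ) = 0 := by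
      rw [hti (b 2) (b 1) (htan 2 h20) (htan 1 h10), hbite]; simp
    fin_cases i <;> fin_cases j <;>
      simp [hu, hg1, hp1 1 h10, hp1 2 h20, hp1' 1 h10, hp1' 2 h20, ht11, ht22, ht12, ht21,
        hisom x₀ hx₀ _ (htan 1 h10), hisom x₀ hx₀ _ (htan 2 h20), hbon.1 1, hbon.1 2, h1 x₀ hx₀]
  -- expand p in this frame
  have hpexp := expand3 huon p
  have hc1 : (⟪u 1, p⟫ : ℝ) = 0 := hderiv0 1 h10
  have hc2 : (⟪u 2, p⟫ : ℝ) = 0 := hderiv0 2 h20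
  rw [Fin.sum_univ_three, hc1, hc2, zero_smul, zero_smul, add_zero, add_zero] at hpexp
  set c : ℝ := ⟪u 0, p⟫ with hc
  have hu0 : u 0 = g x₀ := rfl
  have hcsq : c ^ 2 = 1 := by
    have : (⟪p, p⟫ : ℝ) = 1 := by rw [real_inner_self_eq_norm_sq, hp]; norm_num
    rw [hpexp] at this
    rw [real_inner_smul_left, real_inner_smul_right] at this
    rw [hu0] at this
    rw [real_inner_self_eq_norm_sq, h1 x₀ hx₀] at this
    nlinarith
  rcases mul_self_eq_one_iff.mp (by nlinarith : c * c = 1) with h | h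
  · exact ⟨x₀, hx₀, by rw [hpexp, h, one_smul, hu0]⟩
  · exfalso
    have hneg : p = -g x₀ := by rw [hpexp, h, hu0]; module
    have hmaxval : (⟪g x₀, p⟫ : ℝ) = -1 := by
      rw [hneg, inner_neg_right, real_inner_self_eq_norm_sq, h1 x₀ hx₀]; norm_num
    have hall : ∀ y : E3, ‖y‖ = 1 → g y = -p := by
      intro y hy
      have hle : (⟪g y, p⟫ : ℝ) ≤ -1 := by
        have := hmax ((hmem y).2 hy)
        simpa [hmaxval] using this
      have hge : (-1 : ℝ) ≤ ⟪g y, p⟫ := by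
        have h2 := abs_real_inner_le_norm (g y) p
        rw [h1 y hy, hp, one_mul] at h2
        linarith [neg_abs_le (⟪g y, p⟫ : ℝ)]
      have heqn : (⟪g y, p⟫ : ℝ) = -1 := le_antisymm hle hge
      have hzero : ‖g y + p‖ ^ 2 = 0 := by
        rw [norm_add_sq_real, heqn, h1 y hy, hp]; norm_num
      have : g y + p = 0 := by
        rwa [pow_eq_zero_iff (by norm_num), norm_eq_zero] at hzero
      linear_combination (norm := module) this
    have hbn : ‖(b 1 : E3)‖ = 1 := hbon.1 1
    have hconst : (fun t => g (sc x₀ (b 1) t)) = fun _ => -p :=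
      funext fun t => hall _ (sc_mem x₀ (b 1) hx₀ hbn (htan 1 h10) t)
    have h0 : fderiv ℝ g x₀ (b 1) = 0 := by
      have hcurve := comp_sc_hasDerivAt (hd x₀ hx₀) (b 1)
      rw [hconst] at hcurve
      exact hcurve.unique (hasDerivAt_const 0 (-p))
    have hcontra := hisom x₀ hx₀ (b 1) (htan 1 h10)
    rw [h0, hbn, norm_zero] at hcontra
    exact zero_ne_one hcontra

lemma inner_pres (hd : ∀ y : E3, ‖y‖ = 1 → DifferentiableAt ℝ g y)
    (h1 : ∀ y : E3, ‖y‖ = 1 → ‖g y‖ = 1)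
    (hisom : ∀ x : E3, ‖x‖ = 1 → ∀ v, ⟪v, x⟫ = 0 → ‖fderiv ℝ g x v‖ = ‖v‖)
    {a b : E3} (ha : ‖a‖ = 1) (hb : ‖b‖ = 1) : ⟪g a, g b⟫ = ⟪a, b⟫ := by
  have hodd : ∀ x : E3, ‖x‖ = 1 → g (-x) = -g x := by
    intro x hx
    have hngx : ‖(-(g x) : E3)‖ = 1 := by rw [norm_neg]; exact h1 x hx
    obtain ⟨z, hz, hgz⟩ := surj hd h1 hisom hngx
    have hzx : (⟪z, x⟫ : ℝ) = -1 := by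
      have hle := inner_ge hd h1 hisom hz hx
      rw [hgz, inner_neg_left, real_inner_self_eq_norm_sq, h1 x hx] at hle
      have h2 := abs_real_inner_le_norm z x
      rw [hz, hx, one_mul] at h2
      have := neg_abs_le (⟪z, x⟫ : ℝ)
      rw [one_pow] at hle
      linarith
    have hzeq : z = -x := by
      have : ‖z + x‖ ^ 2 = 0 := by
        rw [norm_add_sq_real, hzx, hz, hx]; norm_num
      have h0 : z + x = 0 := by
        rwa [pow_eq_zero_iff (by norm_num), norm_eq_zero] at this
      linear_combination (norm := module) h0
    rw [← hzeq, hgz]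
  have h2 := inner_ge hd h1 hisom ha (show ‖(-b : E3)‖ = 1 by rw [norm_neg]; exact hb)
  rw [hodd b hb, inner_neg_right, inner_neg_right] at h2
  have h3 := inner_ge hd h1 hisom ha hb
  linarith

lemma tangent_deriv_inner (hd : ∀ y : E3, ‖y‖ = 1 → DifferentiableAt ℝ g y)
    (h1 : ∀ y : E3, ‖y‖ = 1 → ‖g y‖ = 1)
    (hisom : ∀ x : E3, ‖x‖ = 1 → ∀ v, ⟪v, x⟫ = 0 → ‖fderiv ℝ g x v‖ = ‖v‖)
    {x v y : E3} (hx : ‖x‖ = 1) (hvx : ⟪v, x⟫ = 0) (hy : ‖y‖ = 1) :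
    ⟪fderiv ℝ g x v, g y⟫ = ⟪v, y⟫ := by
  rcases eq_or_ne v 0 with rfl | hv0
  · simp
  set u : E3 := ‖v‖⁻¹ • v with hu
  have hvu : v = ‖v‖ • u := by
    rw [hu, smul_smul, mul_inv_cancel₀ (norm_ne_zero_iff.2 hv0), one_smul]
  have hnu : ‖u‖ = 1 := by
    rw [hu, norm_smul]; simp [norm_ne_zero_iff.2 hv0]
  have hux : ⟪u, x⟫ = 0 := by rw [hu, real_inner_smul_left, hvx, mul_zero]
  have key : ⟪fderiv ℝ g x u, g y⟫ = ⟪u, y⟫ := by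
    have hφ : HasDerivAt (fun t => (⟪g (sc x u t), g y⟫ : ℝ))
        (⟪g (sc x u 0), (0:E3)⟫ + ⟪fderiv ℝ g x u, g y⟫) 0 :=
      HasDerivAt.inner ℝ (comp_sc_hasDerivAt (hd x hx) u) (hasDerivAt_const 0 (g y))
    have hψ : HasDerivAt (fun t => (⟪sc x u t, y⟫ : ℝ))
        (⟪sc x u 0, (0:E3)⟫ + ⟪u, y⟫) 0 :=
      HasDerivAt.inner ℝ (sc_hasDerivAt_zero x u) (hasDerivAt_const 0 y)
    have heq : (fun t => (⟪g (sc x u t), g y⟫ : ℝ)) = fun t => (⟪sc x u t, y⟫ : ℝ) :=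
      funext fun t => inner_pres hd h1 hisom (sc_mem x u hx hnu hux t) hy
    rw [heq] at hφ
    have := hφ.unique hψ
    simpa using this
  rw [hvu, _root_.map_smul, real_inner_smul_left, real_inner_smul_left, key]


end SphereRig

open SphereRig in
open RealInnerProductSpace in
/-- **Isometries of the sphere are rigid rotations** (Proposition 6.2):
if `f` is differentiable on an open neighborhood of the unit sphere `S²`, maps `S²`
into `S²`, maps each tangent plane isometrically, and preserves orientation, then
`f` is the restriction to `S²` of a single rotation `Q ∈ SO(3)`. -/
theorem sphere_isometry_is_rotation
    (f : (Fin 3 → ℝ) → (Fin 3 → ℝ))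
    (hdiff : ∃ U : Set (Fin 3 → ℝ), IsOpen U ∧ {x | len3 x = 1} ⊆ U ∧
      DifferentiableOn ℝ f U)
    (hsphere : ∀ x, len3 x = 1 → len3 (f x) = 1)
    (hisom : ∀ x, len3 x = 1 → ∀ v, dot3 v x = 0 →
      len3 (fderiv ℝ f x v) = len3 v)
    (horient : ∀ x, len3 x = 1 → ∀ v w, dot3 v x = 0 → dot3 w x = 0 →
      dot3 (cross3 (fderiv ℝ f x v) (fderiv ℝ f x w)) (f x) = dot3 (cross3 v w) x) :
    ∃ Q : Matrix (Fin 3) (Fin 3) ℝ,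
      Qᵀ * Q = 1 ∧ Q.det = 1 ∧ ∀ x, len3 x = 1 → f x = Q.mulVec x := by
  classical
  obtain ⟨U, hUopen, hUsub, hUdiff⟩ := hdiff
  set g : E3 → E3 := fun x => WithLp.toLp 2 (f (WithLp.ofLp x)) with hgdef
  have hdraw : ∀ x : E3, ‖x‖ = 1 → DifferentiableAt ℝ f x := by
    intro x hx
    exact hUdiff.differentiableAt (hUopen.mem_nhds (hUsub (by
      rw [Set.mem_setOf_eq, len3_eq]; exact hx)))
  have hhas : ∀ x : E3, ‖x‖ = 1 → HasFDerivAt (𝕜 := ℝ) (E := E3) (F := E3) g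
      ((((EuclideanSpace.equiv (Fin 3) ℝ).symm : (Fin 3 → ℝ) →L[ℝ] E3).comp
        ((fderiv ℝ f x).comp ((EuclideanSpace.equiv (Fin 3) ℝ) : E3 →L[ℝ] (Fin 3 → ℝ))))) x := by
    intro x hx
    exact ((EuclideanSpace.equiv (Fin 3) ℝ).symm.hasFDerivAt.comp _
      (((hdraw x hx).hasFDerivAt).comp _ (EuclideanSpace.equiv (Fin 3) ℝ).hasFDerivAt))
  have hd3 : ∀ x : E3, ‖x‖ = 1 → DifferentiableAt ℝ g x :=
    fun x hx => (hhas x hx).differentiableAt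
  have happ : ∀ x : E3, ‖x‖ = 1 → ∀ v : E3, WithLp.ofLp (fderiv ℝ g x v) = fderiv ℝ f (WithLp.ofLp x) (WithLp.ofLp v) := by
    intro x hx v
    rw [(hhas x hx).fderiv]
    rfl
  have h1 : ∀ x : E3, ‖x‖ = 1 → ‖g x‖ = 1 := by
    intro x hx
    rw [← len3_eq]
    exact hsphere x (by rw [len3_eq]; exact hx)
  have hisomE : ∀ x : E3, ‖x‖ = 1 → ∀ v : E3, ⟪v, x⟫ = 0 → ‖fderiv ℝ g x v‖ = ‖v‖ := by
    intro x hx v hv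
    rw [← len3_eq, ← len3_eq, happ x hx v]
    exact hisom x (by rw [len3_eq]; exact hx) v (by rw [dot3_eq]; exact hv)
  have hpres : ∀ {a b : E3}, ‖a‖ = 1 → ‖b‖ = 1 → ⟪g a, g b⟫ = ⟪a, b⟫ :=
    fun ha hb => inner_pres hd3 h1 hisomE ha hb
  set u : Fin 3 → E3 := fun j => g (EuclideanSpace.single j 1) with hudef
  have hsn : ∀ j : Fin 3, ‖EuclideanSpace.single j (1:ℝ)‖ = 1 := by
    intro j; rw [EuclideanSpace.norm_single]; norm_num
  have hsij : ∀ i j : Fin 3,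
      (⟪EuclideanSpace.single i (1:ℝ), EuclideanSpace.single j (1:ℝ)⟫ : ℝ)
        = if i = j then 1 else 0 := by
    intro i j
    rcases eq_or_ne i j with rfl | h
    · simp [EuclideanSpace.inner_single_left, EuclideanSpace.single_apply]
    · simp [EuclideanSpace.inner_single_left, EuclideanSpace.single_apply, h, Ne.symm h]
  have huinner : ∀ i j : Fin 3, (⟪u i, u j⟫ : ℝ) = if i = j then 1 else 0 :=
    fun i j => (hpres (hsn i) (hsn j)).trans (hsij i j)
  have huon : Orthonormal ℝ u := orthonormal_iff_ite.2 huinner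
  refine ⟨Matrix.of (fun i j : Fin 3 => u j i), ?_, ?_, ?_⟩
  · ext i j
    rw [Matrix.mul_apply, Matrix.one_apply]
    have h := huinner i j
    simp only [PiLp.inner_apply, RCLike.inner_apply, conj_trivial] at h
    simpa [Matrix.transpose_apply, Matrix.of_apply, mul_comm] using h
  · have htan : ∀ i : Fin 3, i ≠ 2 →
        (⟪EuclideanSpace.single i (1:ℝ), EuclideanSpace.single 2 (1:ℝ)⟫ : ℝ) = 0 := by
      intro i hi; rw [hsij]; simp [hi]
    have hD : ∀ i : Fin 3, i ≠ 2 →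
        fderiv ℝ g (EuclideanSpace.single 2 (1:ℝ)) (EuclideanSpace.single i (1:ℝ)) = u i := by
      intro i hi
      set D := fderiv ℝ g (EuclideanSpace.single 2 (1:ℝ)) (EuclideanSpace.single i (1:ℝ))
        with hDdef
      have hco : ∀ j : Fin 3, (⟪u j, D⟫ : ℝ) = if i = j then 1 else 0 := by
        intro j
        rw [real_inner_comm D (u j)]
        exact (tangent_deriv_inner hd3 h1 hisomE (hsn 2) (htan i hi) (hsn j)).trans (hsij i j)
      have hexp := expand3 huon D
      rw [Fin.sum_univ_three, hco 0, hco 1, hco 2] at hexp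
      have h0 : (if i = 0 then (1:ℝ) else 0) • u 0 + (if i = 1 then (1:ℝ) else 0) • u 1
          + (if i = 2 then (1:ℝ) else 0) • u 2 = u i := by
        fin_cases i <;> simp
      exact hexp.trans h0
    have horr := horient (EuclideanSpace.single 2 (1:ℝ))
      (by rw [len3_eq]; exact hsn 2)
      (EuclideanSpace.single 0 (1:ℝ)) (EuclideanSpace.single 1 (1:ℝ))
      (by rw [dot3_eq]; exact htan 0 (by decide))
      (by rw [dot3_eq]; exact htan 1 (by decide))
    rw [← happ _ (hsn 2) _, ← happ _ (hsn 2) _, hD 0 (by decide), hD 1 (by decide)] at horr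
    have hval : dot3 (cross3 (EuclideanSpace.single 0 (1:ℝ)) (EuclideanSpace.single 1 (1:ℝ)))
        (EuclideanSpace.single 2 (1:ℝ)) = 1 := by
      simp [dot3, cross3, EuclideanSpace.single_apply]
    rw [hval] at horr
    have horr2 : dot3 (cross3 (u 0) (u 1)) (u 2) = 1 := horr
    rw [Matrix.det_fin_three]
    simp only [Matrix.of_apply]
    simp only [dot3, cross3, Matrix.cons_val_zero, Matrix.cons_val_one, Matrix.head_cons,
      Matrix.cons_val_two, Matrix.tail_cons] at horr2
    linear_combination horr2
  · intro x hx
    set xE : E3 := WithLp.toLp 2 x with hxEdef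
    have hxE : ‖xE‖ = 1 := by rw [← len3_eq]; exact hx
    have hexp := expand3 huon (g xE)
    have hco : ∀ j : Fin 3, (⟪u j, g xE⟫ : ℝ) = x j := by
      intro j
      refine (hpres (hsn j) hxE).trans ?_
      simp [EuclideanSpace.inner_single_left, xE]
    rw [Fin.sum_univ_three, hco 0, hco 1, hco 2] at hexp
    have hfx : f x = WithLp.ofLp (g xE) := rfl
    rw [hfx]
    funext k
    have hL := congrArg (fun w : E3 => (w : Fin 3 → ℝ) k) hexp
    simp only [PiLp.add_apply, PiLp.smul_apply, WithLp.ofLp_add, WithLp.ofLp_smul, Pi.add_apply,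
      Pi.smul_apply, smul_eq_mul] at hL
    rw [hL]
    simp [Matrix.mulVec, dotProduct, Fin.sum_univ_three, Matrix.of_apply]
    ring
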